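/- Suppose u₃ : [0, T) → ℝ is differentiable with u₃(0) = 0, u₃' ≤ -b - m·coth(mτ)·u₃ on (0, T), where b > 0, m > 0. Then u₃(τ) ≤ -b(cosh mτ - 1)/(m sinh mτ) for all τ ∈ (0, T), and consequently ∫₀^τ u₃ ds ≤ -(2b/m²) log cosh(mτ/2). -/

import Mathlib

open Real Set MeasureTheory

lemma sinh_pos' {y : ℝ} (hy : 0 < y) : 0 < Real.sinh y := by
  rw [Real.sinh_eq]
  have h1 : Real.exp (-y) < Real.exp y := Real.exp_lt_exp.2 (by linarith)
  linarith

lemma hyp_half_id (t : ℝ) (ht : 0 < t) :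
    (Real.cosh (2*t) - 1) / Real.sinh (2*t) = Real.sinh t / Real.cosh t := by
  have hs : Real.sinh (2*t) ≠ 0 := ne_of_gt (sinh_pos' (by linarith))
  have hc : Real.cosh t ≠ 0 := ne_of_gt (Real.cosh_pos t)
  rw [div_eq_div_iff hs hc, Real.cosh_two_mul, Real.sinh_two_mul]
  linear_combination Real.cosh t * Real.cosh_sq t

theorem coth_comparison_neg (T b m : ℝ) (hb : 0 < b) (hm : 0 < m) (hT : 0 < T)
    (u₃ u₃' : ℝ → ℝ) (h0 : u₃ 0 = 0)
    (hcont : ContinuousOn u₃ (Ico 0 T))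
    (hderiv : ∀ τ ∈ Ioo (0:ℝ) T, HasDerivAt u₃ (u₃' τ) τ)
    (hineq : ∀ τ ∈ Ioo (0:ℝ) T,
      u₃' τ ≤ -b - m * (Real.cosh (m * τ) / Real.sinh (m * τ)) * u₃ τ) :
    (∀ τ ∈ Ioo (0:ℝ) T,
      u₃ τ ≤ -b * (Real.cosh (m * τ) - 1) / (m * Real.sinh (m * τ))) ∧
    ∀ τ ∈ Ioo (0:ℝ) T,
      (∫ s in (0:ℝ)..τ, u₃ s) ≤ -(2 * b / m ^ 2) * Real.log (Real.cosh (m * τ / 2)) := by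
  -- Part 1
  have part1 : ∀ τ ∈ Ioo (0:ℝ) T,
      u₃ τ ≤ -b * (Real.cosh (m * τ) - 1) / (m * Real.sinh (m * τ)) := by
    intro τ hτ
    obtain ⟨hτ0, hτT⟩ := hτ
    set w : ℝ → ℝ := fun x => u₃ x * Real.sinh (m * x) + b * (Real.cosh (m * x) - 1) / m
      with hw
    set w' : ℝ → ℝ := fun x =>
      u₃' x * Real.sinh (m * x) + u₃ x * (m * Real.cosh (m * x)) + b * Real.sinh (m * x) / m * m
      with hw'
    have hsub : Icc (0:ℝ) τ ⊆ Ico 0 T := fun x hx => ⟨hx.1, lt_of_le_of_lt hx.2 hτT⟩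
    have hwc : ContinuousOn w (Icc 0 τ) := by
      apply ContinuousOn.add
      · exact (hcont.mono hsub).mul ((Real.continuous_sinh.comp (continuous_const.mul
          continuous_id)).continuousOn)
      · exact ((continuous_const.mul ((Real.continuous_cosh.comp (continuous_const.mul
          continuous_id)).sub continuous_const)).div_const m).continuousOn
    have hwd : ∀ x ∈ interior (Icc (0:ℝ) τ), HasDerivWithinAt w (w' x) (interior (Icc (0:ℝ) τ)) x := by
      intro x hx
      rw [interior_Icc] at hx
      have hxT : x ∈ Ioo (0:ℝ) T := ⟨hx.1, lt_trans hx.2 hτT⟩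
      have h1 : HasDerivAt (fun y => Real.sinh (m * y)) (m * Real.cosh (m * x)) x := by
        have := (Real.hasDerivAt_sinh (m * x)).comp x ((hasDerivAt_id x).const_mul m)
        simpa [mul_comm, Function.comp_def] using this
      have h2 : HasDerivAt (fun y => Real.cosh (m * y)) (m * Real.sinh (m * x)) x := by
        have := (Real.hasDerivAt_cosh (m * x)).comp x ((hasDerivAt_id x).const_mul m)
        simpa [mul_comm, Function.comp_def] using this
      have : HasDerivAt w (w' x) x := by
        have := ((hderiv x hxT).mul h1).add
          ((((h2.sub_const 1).const_mul b).div_const m))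
        convert this using 1
        · rfl
        · rfl
        · rfl
        simp only [w']
        field_simp
      exact this.hasDerivWithinAt
    have hw'le : ∀ x ∈ interior (Icc (0:ℝ) τ), w' x ≤ 0 := by
      intro x hx
      rw [interior_Icc] at hx
      have hxT : x ∈ Ioo (0:ℝ) T := ⟨hx.1, lt_trans hx.2 hτT⟩
      have hs : 0 < Real.sinh (m * x) := sinh_pos' (mul_pos hm hx.1)
      have h := hineq x hxT
      have h3 : u₃' x * Real.sinh (m * x) ≤
          (-b - m * (Real.cosh (m * x) / Real.sinh (m * x)) * u₃ x) * Real.sinh (m * x) :=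
        mul_le_mul_of_nonneg_right h hs.le
      rw [hw']
      have h4 : (-b - m * (Real.cosh (m * x) / Real.sinh (m * x)) * u₃ x) * Real.sinh (m * x)
          = -b * Real.sinh (m * x) - m * Real.cosh (m * x) * u₃ x := by
        field_simp
      rw [h4] at h3
      have hmne : m ≠ 0 := ne_of_gt hm
      field_simp
      nlinarith
    have hanti := antitoneOn_of_hasDerivWithinAt_nonpos (convex_Icc 0 τ) hwc hwd hw'le
    have hwτ : w τ ≤ w 0 := hanti (left_mem_Icc.2 hτ0.le) (right_mem_Icc.2 hτ0.le) hτ0.le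
    have hw0 : w 0 = 0 := by simp [hw, h0]
    rw [hw0] at hwτ
    have hs : 0 < Real.sinh (m * τ) := sinh_pos' (mul_pos hm hτ0)
    simp only [hw] at hwτ
    rw [le_div_iff₀ (mul_pos hm hs)]
    have h7 := mul_le_mul_of_nonneg_right hwτ hm.le
    rw [add_mul, div_mul_cancel₀ _ hm.ne', zero_mul] at h7
    nlinarith [h7]
  refine ⟨part1, ?_⟩
  -- Part 2
  intro τ hτ
  obtain ⟨hτ0, hτT⟩ := hτ
  have hsub : Icc (0:ℝ) τ ⊆ Ico 0 T := fun x hx => ⟨hx.1, lt_of_le_of_lt hx.2 hτT⟩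
  set F : ℝ → ℝ := fun x => (∫ s in (0:ℝ)..x, u₃ s) + 2 * b / m ^ 2 * Real.log (Real.cosh (m * x / 2)) with hF
  set F' : ℝ → ℝ := fun x => u₃ x + 2 * b / m ^ 2 * ((m / 2) * Real.sinh (m * x / 2) / Real.cosh (m * x / 2)) with hF'
  have hInt : IntegrableOn u₃ (Icc 0 τ) := (hcont.mono hsub).integrableOn_Icc
  have hFc : ContinuousOn F (Icc 0 τ) := by
    apply ContinuousOn.add
    · have := intervalIntegral.continuousOn_primitive_interval
        (f := u₃) (a := 0) (b := τ) (μ := volume) (by rwa [uIcc_of_le hτ0.le])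
      rwa [uIcc_of_le hτ0.le] at this
    · exact (continuous_const.mul ((Real.continuous_cosh.comp
        ((continuous_const.mul continuous_id).div_const 2)).log
        (fun x => ne_of_gt (Real.cosh_pos _)))).continuousOn
  have hFd : ∀ x ∈ interior (Icc (0:ℝ) τ), HasDerivWithinAt F (F' x) (interior (Icc (0:ℝ) τ)) x := by
    intro x hx
    rw [interior_Icc] at hx
    have hxT : x ∈ Ioo (0:ℝ) T := ⟨hx.1, lt_trans hx.2 hτT⟩
    have hii : IntervalIntegrable u₃ volume 0 x := by
      apply ContinuousOn.intervalIntegrable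
      rw [uIcc_of_le hx.1.le]
      exact hcont.mono (fun y hy => ⟨hy.1, lt_of_le_of_lt hy.2 (lt_trans hx.2 hτT)⟩)
    have hmeas : StronglyMeasurableAtFilter u₃ (nhds x) volume :=
      ContinuousAt.stronglyMeasurableAtFilter isOpen_Ioo
        (fun y hy => (hderiv y hy).continuousAt) x hxT
    have hI : HasDerivAt (fun y => ∫ s in (0:ℝ)..y, u₃ s) (u₃ x) x :=
      intervalIntegral.integral_hasDerivAt_right hii hmeas (hderiv x hxT).continuousAt
    have hch : HasDerivAt (fun y => Real.cosh (m * y / 2)) ((m / 2) * Real.sinh (m * x / 2)) x := by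
      have := (Real.hasDerivAt_cosh (m * x / 2)).comp x
        (((hasDerivAt_id x).const_mul m).div_const 2)
      simpa [mul_comm, Function.comp_def] using this
    have hL : HasDerivAt (fun y => Real.log (Real.cosh (m * y / 2)))
        ((m / 2) * Real.sinh (m * x / 2) / Real.cosh (m * x / 2)) x :=
      hch.log (ne_of_gt (Real.cosh_pos _))
    exact (hI.add (hL.const_mul (2 * b / m ^ 2))).hasDerivWithinAt
  have hF'le : ∀ x ∈ interior (Icc (0:ℝ) τ), F' x ≤ 0 := by
    intro x hx
    rw [interior_Icc] at hx
    have hxT : x ∈ Ioo (0:ℝ) T := ⟨hx.1, lt_trans hx.2 hτT⟩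
    have h1 := part1 x hxT
    have hid : (Real.cosh (m * x) - 1) / Real.sinh (m * x)
        = Real.sinh (m * x / 2) / Real.cosh (m * x / 2) := by
      have := hyp_half_id (m * x / 2) (div_pos (mul_pos hm hx.1) two_pos)
      rwa [show 2 * (m * x / 2) = m * x by ring] at this
    have hc : (0:ℝ) < Real.cosh (m * x / 2) := Real.cosh_pos _
    have key : -b * (Real.cosh (m * x) - 1) / (m * Real.sinh (m * x))
        = -(2 * b / m ^ 2 * ((m / 2) * Real.sinh (m * x / 2) / Real.cosh (m * x / 2))) := by
      rw [show -b * (Real.cosh (m * x) - 1) / (m * Real.sinh (m * x))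
          = -(b/m) * ((Real.cosh (m * x) - 1) / Real.sinh (m * x)) from by ring, hid]
      field_simp
    rw [hF']
    rw [key] at h1
    linarith
  have hanti := antitoneOn_of_hasDerivWithinAt_nonpos (convex_Icc 0 τ) hFc hFd hF'le
  have hFτ : F τ ≤ F 0 := hanti (left_mem_Icc.2 hτ0.le) (right_mem_Icc.2 hτ0.le) hτ0.le
  have hF0 : F 0 = 0 := by simp [hF]
  rw [hF0] at hFτ
  rw [hF] at hFτ
  simp only at hFτ
  linarith
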